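/- arXiv:2207.07698 — 4 statements merged into one kernel-verified Lean document; each statement's English description precedes it below -/
import Mathlib

section
/- Let (b_j)_{j≥1} be a sequence of nonnegative real numbers, let K ≥ 0, and let A be a function assigning to every multi-index ν a nonnegative real number A(ν). Assume A(0) ≤ K and that for every multi-index ν ≠ 0 we have A(ν) ≤ ∑_{j ∈ supp(ν)} ν_j · b_j · A(ν − e_j). Then for every multi-index ν it holds that A(ν) ≤ |ν|! · b^ν · K, where b^ν = ∏_j b_j^{ν_j}. -/
/-- The order `|ν|` of a multi-index `ν : ℕ →₀ ℕ`. -/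
def multiOrder (ν : ℕ →₀ ℕ) : ℕ := ν.sum fun _ n => n

lemma sub_single_apply (ν : ℕ →₀ ℕ) (j i : ℕ) :
    ((ν - Finsupp.single j 1 : ℕ →₀ ℕ) i) = ν i - Finsupp.single j 1 i := by
  simp [Finsupp.tsub_apply]

lemma support_sub_single (ν : ℕ →₀ ℕ) (j : ℕ) :
    (ν - Finsupp.single j 1).support ⊆ ν.support := by
  intro i hi
  simp only [Finsupp.mem_support_iff, sub_single_apply] at hi ⊢
  omega

lemma multiOrder_sub_single (ν : ℕ →₀ ℕ) (j : ℕ) (hj : j ∈ ν.support) :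
    multiOrder (ν - Finsupp.single j 1) = multiOrder ν - 1 := by
  have h1 : multiOrder (ν - Finsupp.single j 1)
      = ∑ i ∈ ν.support, ((ν - Finsupp.single j 1 : ℕ →₀ ℕ) i) := by
    rw [multiOrder, Finsupp.sum]
    exact Finset.sum_subset (support_sub_single ν j)
      (fun i _ hi => by simpa using Finsupp.notMem_support_iff.mp hi)
  have h2 : multiOrder ν = ∑ i ∈ ν.support, ν i := rfl
  rw [h1, h2, ← Finset.add_sum_erase _ _ hj, ← Finset.add_sum_erase _ ν hj]
  have he : ∑ i ∈ ν.support.erase j, ((ν - Finsupp.single j 1 : ℕ →₀ ℕ) i)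
      = ∑ i ∈ ν.support.erase j, ν i := by
    refine Finset.sum_congr rfl fun i hi => ?_
    rw [sub_single_apply, Finsupp.single_apply,
      if_neg (Finset.ne_of_mem_erase hi).symm, Nat.sub_zero]
  rw [he, sub_single_apply, Finsupp.single_apply, if_pos rfl]
  have : 1 ≤ ν j := Nat.one_le_iff_ne_zero.mpr (Finsupp.mem_support_iff.mp hj)
  omega

lemma prod_sub_single (b : ℕ → ℝ) (ν : ℕ →₀ ℕ) (j : ℕ) (hj : j ∈ ν.support) :
    b j * ∏ i ∈ (ν - Finsupp.single j 1).support, b i ^ ((ν - Finsupp.single j 1 : ℕ →₀ ℕ) i)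
      = ∏ i ∈ ν.support, b i ^ ν i := by
  have h1 : (∏ i ∈ (ν - Finsupp.single j 1).support, b i ^ ((ν - Finsupp.single j 1 : ℕ →₀ ℕ) i))
      = ∏ i ∈ ν.support, b i ^ ((ν - Finsupp.single j 1 : ℕ →₀ ℕ) i) :=
    Finset.prod_subset (support_sub_single ν j)
      (fun i _ hi => by rw [Finsupp.notMem_support_iff.mp hi, pow_zero])
  rw [h1, ← Finset.mul_prod_erase _ _ hj, ← Finset.mul_prod_erase _ (fun i => b i ^ ν i) hj]
  have he : ∏ i ∈ ν.support.erase j, b i ^ ((ν - Finsupp.single j 1 : ℕ →₀ ℕ) i)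
      = ∏ i ∈ ν.support.erase j, b i ^ ν i := by
    refine Finset.prod_congr rfl fun i hi => ?_
    rw [sub_single_apply, Finsupp.single_apply,
      if_neg (Finset.ne_of_mem_erase hi).symm, Nat.sub_zero]
  rw [he, sub_single_apply, Finsupp.single_apply, if_pos rfl, ← mul_assoc, ← pow_succ']
  have : 1 ≤ ν j := Nat.one_le_iff_ne_zero.mpr (Finsupp.mem_support_iff.mp hj)
  rw [Nat.sub_add_cancel this]

/-- inductive regularity bound (affine/uniform setting). -/
theorem stmt0 (b : ℕ → ℝ) (hb : ∀ j, 0 ≤ b j) (K : ℝ) (hK : 0 ≤ K)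
    (A : (ℕ →₀ ℕ) → ℝ) (hA : ∀ ν, 0 ≤ A ν)
    (hA0 : A 0 ≤ K)
    (hrec : ∀ ν : ℕ →₀ ℕ, ν ≠ 0 →
      A ν ≤ ∑ j ∈ ν.support, (ν j : ℝ) * b j * A (ν - Finsupp.single j 1)) :
    ∀ ν : ℕ →₀ ℕ,
      A ν ≤ (Nat.factorial (multiOrder ν) : ℝ) * (∏ j ∈ ν.support, b j ^ ν j) * K := by
  suffices h : ∀ n : ℕ, ∀ ν : ℕ →₀ ℕ, multiOrder ν = n →
      A ν ≤ (Nat.factorial (multiOrder ν) : ℝ) * (∏ j ∈ ν.support, b j ^ ν j) * K from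
    fun ν => h _ ν rfl
  intro n
  induction n using Nat.strong_induction_on with
  | _ n ih =>
  intro ν hn
  rcases eq_or_ne ν 0 with rfl | hν
  · simpa [multiOrder] using hA0
  · obtain ⟨j0, hj0⟩ := Finsupp.support_nonempty_iff.mpr hν
    have hn1 : 1 ≤ n := by
      have h1 : 1 ≤ ν j0 := Nat.one_le_iff_ne_zero.mpr (Finsupp.mem_support_iff.mp hj0)
      have hle : ν j0 ≤ ∑ i ∈ ν.support, ν i :=
        Finset.single_le_sum (f := fun i => ν i) (fun i _ => Nat.zero_le _) hj0
      have hns : n = ∑ i ∈ ν.support, ν i := by rw [← hn]; rfl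
      omega
    rw [hn]
    calc A ν ≤ ∑ j ∈ ν.support, (ν j : ℝ) * b j * A (ν - Finsupp.single j 1) := hrec ν hν
      _ ≤ ∑ j ∈ ν.support, (ν j : ℝ) *
            (((n-1).factorial : ℝ) * ((∏ i ∈ ν.support, b i ^ ν i) * K)) := by
          refine Finset.sum_le_sum fun j hj => ?_
          have hm : multiOrder (ν - Finsupp.single j 1) = n - 1 := by
            rw [multiOrder_sub_single ν j hj, hn]
          have hA' := ih (n-1) (by omega) _ hm
          rw [hm] at hA'
          have hjb : (0:ℝ) ≤ (ν j : ℝ) * b j := mul_nonneg (Nat.cast_nonneg _) (hb j)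
          calc (ν j : ℝ) * b j * A (ν - Finsupp.single j 1)
              ≤ (ν j : ℝ) * b j * (((n-1).factorial : ℝ) *
                  (∏ i ∈ (ν - Finsupp.single j 1).support,
                    b i ^ ((ν - Finsupp.single j 1 : ℕ →₀ ℕ) i)) * K) :=
                mul_le_mul_of_nonneg_left hA' hjb
            _ = (ν j : ℝ) * (((n-1).factorial : ℝ) *
                  ((b j * ∏ i ∈ (ν - Finsupp.single j 1).support,
                    b i ^ ((ν - Finsupp.single j 1 : ℕ →₀ ℕ) i)) * K)) := by ring
            _ = _ := by rw [prod_sub_single b ν j hj]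
      _ = (∑ j ∈ ν.support, (ν j : ℝ)) *
            (((n-1).factorial : ℝ) * ((∏ i ∈ ν.support, b i ^ ν i) * K)) := by
          rw [← Finset.sum_mul]
      _ = (n : ℝ) * (((n-1).factorial : ℝ) * ((∏ i ∈ ν.support, b i ^ ν i) * K)) := by
          have hns : (∑ j ∈ ν.support, (ν j : ℝ)) = (n : ℝ) := by
            rw [← hn]
            have : multiOrder ν = ∑ i ∈ ν.support, ν i := rfl
            rw [this]
            push_cast
            ring
          rw [hns]
      _ = (n.factorial : ℝ) * (∏ i ∈ ν.support, b i ^ ν i) * K := by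
          have : n * (n-1).factorial = n.factorial := Nat.mul_factorial_pred (by omega)
          rw [← this]
          push_cast
          ring
end

section
/- Let C ≥ 1, let (β_j)_{j≥1} be a sequence of nonnegative real numbers, and let A be a function assigning to every multi-index ν with ν_j ≤ 1 for all j a nonnegative real number A(ν). Assume that for every such multi-index ν ≠ 0 we have A(ν) ≤ C · ∑_{0 ≠ m ≤ ν} binom(ν, m) · (1 + 3^{|m|}) · β^m · A(ν − m). Then for every multi-index ν with ν_j ≤ 1 for all j it holds that A(ν) ≤ C^{|ν|} · 4^{|ν|} · Λ_{|ν|} · β^ν · A(0), where (Λ_k) are the ordered Bell numbers. -/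
/-- The ordered Bell numbers: `Λ₀ = 1` and `Λ_k = ∑_{ℓ=1}^k C(k,ℓ) Λ_{k-ℓ}` for `k ≥ 1`. -/
def orderedBell : ℕ → ℕ
  | 0 => 1
  | (k + 1) => ∑ i ∈ Finset.range (k + 1), Nat.choose (k + 1) (i + 1) * orderedBell (k - i)
  decreasing_by exact Nat.lt_succ_of_le (Nat.sub_le k i)

lemma multiOrder_zero : multiOrder 0 = 0 := by simp [multiOrder]

lemma multiOrder_add (a b : ℕ →₀ ℕ) : multiOrder (a + b) = multiOrder a + multiOrder b := by
  simp [multiOrder, Finsupp.sum_add_index]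

lemma multiOrder_eq_zero {ν : ℕ →₀ ℕ} (h : multiOrder ν = 0) : ν = 0 := by
  ext j
  by_contra hj
  have hmem : j ∈ ν.support := Finsupp.mem_support_iff.2 (by simpa using hj)
  have := Finset.sum_eq_zero_iff.1 h j hmem
  exact hj (by simpa using this)

lemma multiOrder_eq_card {ν : ℕ →₀ ℕ} (hν : ∀ j, ν j ≤ 1) :
    multiOrder ν = ν.support.card := by
  rw [multiOrder, Finsupp.sum, Finset.card_eq_sum_ones]
  refine Finset.sum_congr rfl fun j hj => ?_
  have h1 := hν j
  have h2 : ν j ≠ 0 := Finsupp.mem_support_iff.1 hj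
  omega

lemma multiOrder_sub_add {ν m : ℕ →₀ ℕ} (hm : m ≤ ν) :
    multiOrder (ν - m) + multiOrder m = multiOrder ν := by
  conv_rhs => rw [← tsub_add_cancel_of_le hm]
  rw [multiOrder_add]

lemma multiOrder_mono {ν m : ℕ →₀ ℕ} (hm : m ≤ ν) : multiOrder m ≤ multiOrder ν := by
  have := multiOrder_sub_add hm
  omega

open Finset in
lemma sum_Iic_eq {M : Type*} [AddCommMonoid M] (ν : ℕ →₀ ℕ) (hν : ∀ j, ν j ≤ 1)
    (g : ℕ → M) :
    ∑ m ∈ Finset.Iic ν, g (multiOrder m) = ∑ s ∈ ν.support.powerset, g s.card := by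
  classical
  refine Finset.sum_nbij' (fun m => m.support) (fun s => ν.filter (· ∈ s)) ?_ ?_ ?_ ?_ ?_
  · intro m hm
    rw [Finset.mem_Iic] at hm
    exact Finset.mem_powerset.2 (Finsupp.support_mono hm)
  · intro s hs
    rw [Finset.mem_powerset] at hs
    rw [Finset.mem_Iic]
    intro j
    rw [Finsupp.filter_apply]
    split <;> simp
  · intro m hm
    rw [Finset.mem_Iic] at hm
    ext j
    rw [Finsupp.filter_apply]
    by_cases hj : j ∈ m.support
    · rw [if_pos hj]
      have h1 : 1 ≤ m j := Nat.one_le_iff_ne_zero.2 (Finsupp.mem_support_iff.1 hj)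
      have h2 : m j ≤ ν j := hm j
      have h3 := hν j
      omega
    · rw [if_neg hj]
      exact (Finsupp.notMem_support_iff.1 hj).symm
  · intro s hs
    rw [Finset.mem_powerset] at hs
    ext j
    simp only [Finsupp.mem_support_iff, Finsupp.filter_apply]
    constructor
    · intro h
      by_contra hj
      simp [hj] at h
    · intro hj
      have := Finsupp.mem_support_iff.1 (hs hj)
      simp [hj, this]
  · intro m hm
    rw [Finset.mem_Iic] at hm
    congr 1
    exact multiOrder_eq_card (fun j => le_trans (hm j) (hν j))

lemma count_lemma (ν : ℕ →₀ ℕ) (hν : ∀ j, ν j ≤ 1) (hν0 : ν ≠ 0) :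
    ∑ m ∈ (Finset.Iic ν).erase 0,
      orderedBell (multiOrder ν - multiOrder m) = orderedBell (multiOrder ν) := by
  classical
  set n := multiOrder ν with hn
  have hcard : ν.support.card = n := (multiOrder_eq_card hν).symm
  obtain ⟨k, hk⟩ : ∃ k, n = k + 1 := by
    have : n ≠ 0 := fun h => hν0 (multiOrder_eq_zero h)
    exact ⟨n - 1, by omega⟩
  have htot : ∑ m ∈ Finset.Iic ν, orderedBell (n - multiOrder m)
      = orderedBell n + orderedBell n := by
    rw [sum_Iic_eq ν hν (fun ℓ => orderedBell (n - ℓ)),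
      Finset.sum_powerset_apply_card (fun ℓ => orderedBell (n - ℓ)), hcard,
      Finset.sum_range_succ']
    simp only [smul_eq_mul, Nat.choose_zero_right, one_mul, Nat.sub_zero]
    congr 1
    rw [hk]
    rw [show orderedBell (k+1) = ∑ i ∈ Finset.range (k + 1),
        Nat.choose (k + 1) (i + 1) * orderedBell (k - i) from by rw [orderedBell]]
    refine Finset.sum_congr rfl fun i _ => ?_
    rw [Nat.succ_sub_succ]
  have h0mem : (0 : ℕ →₀ ℕ) ∈ Finset.Iic ν := Finset.mem_Iic.2 zero_le
  have := Finset.add_sum_erase _ (fun m => orderedBell (n - multiOrder m)) h0mem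
  rw [htot] at this
  simp only [multiOrder_zero, Nat.sub_zero] at this
  omega

lemma prod_pow_split (β : ℕ → ℝ) {ν m : ℕ →₀ ℕ} (hm : m ≤ ν) :
    (∏ j ∈ m.support, β j ^ m j) * (∏ j ∈ (ν - m).support, β j ^ (ν - m) j)
      = ∏ j ∈ ν.support, β j ^ ν j := by
  classical
  have hs1 : m.support ⊆ ν.support := Finsupp.support_mono hm
  have hs2 : (ν - m).support ⊆ ν.support := by
    intro j hj
    have := Finsupp.mem_support_iff.1 hj
    rw [Finsupp.tsub_apply] at this
    exact Finsupp.mem_support_iff.2 (by omega)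
  rw [Finset.prod_subset hs1 (fun j _ hj => by
      rw [Finsupp.notMem_support_iff.1 hj, pow_zero]),
    Finset.prod_subset hs2 (fun j _ hj => by
      rw [Finsupp.notMem_support_iff.1 hj, pow_zero]),
    ← Finset.prod_mul_distrib]
  refine Finset.prod_congr rfl fun j _ => ?_
  rw [← pow_add, Finsupp.tsub_apply]
  congr 1
  have := hm j
  omega

lemma one_add_three_pow_le {ℓ : ℕ} (h : 1 ≤ ℓ) : 1 + 3 ^ ℓ ≤ 4 ^ ℓ := by
  induction ℓ with
  | zero => omega
  | succ k ih =>
    rcases Nat.eq_zero_or_pos k with hk | hk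
    · subst hk; norm_num
    · have := ih hk
      have h3 : 0 < 3 ^ k := Nat.pow_pos (by norm_num)
      calc 1 + 3 ^ (k+1) = 1 + 3 * 3 ^ k := by ring
        _ ≤ 4 * (1 + 3 ^ k) := by omega
        _ ≤ 4 * 4 ^ k := by omega
        _ = 4 ^ (k+1) := by ring

/-- inductive regularity bound in the lognormal setting, via ordered Bell numbers. -/
theorem stmt1 (C : ℝ) (hC : 1 ≤ C) (β : ℕ → ℝ) (hβ : ∀ j, 0 ≤ β j)
    (A : (ℕ →₀ ℕ) → ℝ) (hA : ∀ ν, 0 ≤ A ν)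
    (hrec : ∀ ν : ℕ →₀ ℕ, (∀ j, ν j ≤ 1) → ν ≠ 0 →
      A ν ≤ C * ∑ m ∈ (Finset.Iic ν).erase 0,
        (∏ j ∈ ν.support, (Nat.choose (ν j) (m j) : ℝ)) *
          (1 + 3 ^ (multiOrder m)) * (∏ j ∈ m.support, β j ^ m j) * A (ν - m)) :
    ∀ ν : ℕ →₀ ℕ, (∀ j, ν j ≤ 1) →
      A ν ≤ C ^ (multiOrder ν) * 4 ^ (multiOrder ν) * (orderedBell (multiOrder ν) : ℝ) *
        (∏ j ∈ ν.support, β j ^ ν j) * A 0 := by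
  have hC0 : (0:ℝ) ≤ C := le_trans zero_le_one hC
  suffices h : ∀ k (ν : ℕ →₀ ℕ), multiOrder ν ≤ k → (∀ j, ν j ≤ 1) →
      A ν ≤ C ^ (multiOrder ν) * 4 ^ (multiOrder ν) * (orderedBell (multiOrder ν) : ℝ) *
        (∏ j ∈ ν.support, β j ^ ν j) * A 0 by
    intro ν hν
    exact h (multiOrder ν) ν le_rfl hν
  intro k
  induction k with
  | zero =>
    intro ν h0 hν
    have hν0 : ν = 0 := multiOrder_eq_zero (Nat.le_zero.1 h0)
    subst hν0
    simp [multiOrder_zero, orderedBell]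
  | succ k ih =>
    intro ν hle hν
    by_cases hν0 : ν = 0
    · subst hν0
      simp [multiOrder_zero, orderedBell]
    · set n := multiOrder ν with hn
      have hn1 : 1 ≤ n := by
        have : n ≠ 0 := fun h => hν0 (multiOrder_eq_zero h)
        omega
      have key : ∀ m ∈ (Finset.Iic ν).erase 0,
          (∏ j ∈ ν.support, (Nat.choose (ν j) (m j) : ℝ)) *
            (1 + 3 ^ (multiOrder m)) * (∏ j ∈ m.support, β j ^ m j) * A (ν - m)
          ≤ C ^ (n - 1) * 4 ^ n * (orderedBell (n - multiOrder m) : ℝ) *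
            (∏ j ∈ ν.support, β j ^ ν j) * A 0 := by
        intro m hm
        have hm0 : m ≠ 0 := (Finset.mem_erase.1 hm).1
        have hmν : m ≤ ν := Finset.mem_Iic.1 (Finset.mem_erase.1 hm).2
        have hmle : ∀ j, m j ≤ ν j := hmν
        set ℓ := multiOrder m with hℓ
        have hℓ1 : 1 ≤ ℓ := by
          have : ℓ ≠ 0 := fun h => hm0 (multiOrder_eq_zero h)
          omega
        have hℓn : ℓ ≤ n := multiOrder_mono hmν
        have hsub : multiOrder (ν - m) = n - ℓ := by
          have := multiOrder_sub_add hmν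
          omega
        -- binomial product is 1
        have hbinom : (∏ j ∈ ν.support, (Nat.choose (ν j) (m j) : ℝ)) = 1 := by
          refine Finset.prod_eq_one fun j _ => ?_
          have h1 := hν j
          have h2 := hmle j
          interval_cases h : ν j <;> interval_cases h2 : m j <;> norm_num
        -- IH bound on A (ν - m)
        have hIH : A (ν - m) ≤ C ^ (n - ℓ) * 4 ^ (n - ℓ) * (orderedBell (n - ℓ) : ℝ) *
            (∏ j ∈ (ν - m).support, β j ^ (ν - m) j) * A 0 := by
          have h1 : multiOrder (ν - m) ≤ k := by omega
          have h2 : ∀ j, (ν - m) j ≤ 1 := fun j => by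
            rw [Finsupp.tsub_apply]
            have := hν j
            omega
          have := ih (ν - m) h1 h2
          rwa [hsub] at this
        have hbm : 0 ≤ ∏ j ∈ m.support, β j ^ m j :=
          Finset.prod_nonneg fun j _ => pow_nonneg (hβ j) _
        have h3ℓ : (1 : ℝ) + 3 ^ ℓ ≤ 4 ^ ℓ := by
          have := one_add_three_pow_le hℓ1
          exact_mod_cast this
        have h3pos : (0:ℝ) ≤ 1 + 3 ^ ℓ := by positivity
        calc (∏ j ∈ ν.support, (Nat.choose (ν j) (m j) : ℝ)) *
              (1 + 3 ^ ℓ) * (∏ j ∈ m.support, β j ^ m j) * A (ν - m)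
            = (1 + 3 ^ ℓ) * (∏ j ∈ m.support, β j ^ m j) * A (ν - m) := by
              rw [hbinom, one_mul]
          _ ≤ (4 ^ ℓ) * (∏ j ∈ m.support, β j ^ m j) *
              (C ^ (n - ℓ) * 4 ^ (n - ℓ) * (orderedBell (n - ℓ) : ℝ) *
                (∏ j ∈ (ν - m).support, β j ^ (ν - m) j) * A 0) := by
              have hAn : 0 ≤ A (ν - m) := hA _
              apply mul_le_mul
              · exact mul_le_mul_of_nonneg_right h3ℓ hbm
              · exact hIH
              · exact hAn
              · positivity
          _ = C ^ (n - ℓ) * (4 ^ ℓ * 4 ^ (n - ℓ)) * (orderedBell (n - ℓ) : ℝ) *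
              ((∏ j ∈ m.support, β j ^ m j) *
                (∏ j ∈ (ν - m).support, β j ^ (ν - m) j)) * A 0 := by ring
          _ = C ^ (n - ℓ) * 4 ^ n * (orderedBell (n - ℓ) : ℝ) *
              (∏ j ∈ ν.support, β j ^ ν j) * A 0 := by
              rw [prod_pow_split β hmν, ← pow_add,
                show ℓ + (n - ℓ) = n from by omega]
          _ ≤ C ^ (n - 1) * 4 ^ n * (orderedBell (n - ℓ) : ℝ) *
              (∏ j ∈ ν.support, β j ^ ν j) * A 0 := by
              have hβν : 0 ≤ ∏ j ∈ ν.support, β j ^ ν j :=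
                Finset.prod_nonneg fun j _ => pow_nonneg (hβ j) _
              have hCpow : C ^ (n - ℓ) ≤ C ^ (n - 1) :=
                pow_le_pow_right₀ hC (by omega)
              have hA0 : 0 ≤ A 0 := hA 0
              apply mul_le_mul_of_nonneg_right _ hA0
              apply mul_le_mul_of_nonneg_right _ hβν
              apply mul_le_mul_of_nonneg_right _ (by positivity)
              apply mul_le_mul_of_nonneg_right hCpow (by positivity)
      calc A ν ≤ C * ∑ m ∈ (Finset.Iic ν).erase 0,
              (∏ j ∈ ν.support, (Nat.choose (ν j) (m j) : ℝ)) *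
                (1 + 3 ^ (multiOrder m)) * (∏ j ∈ m.support, β j ^ m j) * A (ν - m) :=
            hrec ν hν hν0
        _ ≤ C * ∑ m ∈ (Finset.Iic ν).erase 0,
              C ^ (n - 1) * 4 ^ n * (orderedBell (n - multiOrder m) : ℝ) *
                (∏ j ∈ ν.support, β j ^ ν j) * A 0 :=
            mul_le_mul_of_nonneg_left (Finset.sum_le_sum key) hC0
        _ = C * (C ^ (n - 1) * 4 ^ n * (∏ j ∈ ν.support, β j ^ ν j) * A 0 *
              ∑ m ∈ (Finset.Iic ν).erase 0, (orderedBell (n - multiOrder m) : ℝ)) := by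
            congr 1
            rw [Finset.mul_sum]
            refine Finset.sum_congr rfl fun m _ => ?_
            ring
        _ = C * (C ^ (n - 1) * 4 ^ n * (∏ j ∈ ν.support, β j ^ ν j) * A 0 *
              (orderedBell n : ℝ)) := by
            congr 1
            congr 1
            rw [← Nat.cast_sum]
            exact_mod_cast congrArg (Nat.cast (R := ℝ)) (count_lemma ν hν hν0)
        _ = C ^ n * 4 ^ n * (orderedBell n : ℝ) *
              (∏ j ∈ ν.support, β j ^ ν j) * A 0 := by
            rw [show C ^ n = C * C ^ (n - 1) from by
              rw [← pow_succ']
              congr 1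
              omega]
            ring
end

section
/- Let ν be a nonzero multi-index. Then ∑_{0 ≠ m ≤ ν} binom(ν, m) · Λ_{|ν| − |m|} = Λ_{|ν|}, where the sum ranges over all nonzero multi-indices m with m ≤ ν componentwise. -/
open Finset

/-- Generalized Vandermonde identity via power series coefficients. -/
lemma vdm (s : Finset ℕ) (ν : ℕ → ℕ) (ℓ : ℕ) :
    ∑ μ ∈ Finset.finsuppAntidiag s ℓ, ∏ j ∈ s, (ν j).choose (μ j)
      = (∑ j ∈ s, ν j).choose ℓ := by
  have h := PowerSeries.coeff_prod
    (fun j => (((1 + Polynomial.X : Polynomial ℕ) ^ (ν j) : Polynomial ℕ) : PowerSeries ℕ)) ℓ s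
  have hco : ∀ n k : ℕ, (PowerSeries.coeff (R := ℕ) k)
      (((1 + Polynomial.X : Polynomial ℕ) ^ n : Polynomial ℕ) : PowerSeries ℕ) = n.choose k := by
    intro n k
    rw [Polynomial.coeff_coe, Polynomial.coeff_one_add_X_pow, Nat.cast_id]
  rw [show (∏ j ∈ s, (((1 + Polynomial.X : Polynomial ℕ) ^ (ν j) : Polynomial ℕ) : PowerSeries ℕ))
      = (((1 + Polynomial.X : Polynomial ℕ) ^ (∑ j ∈ s, ν j) : Polynomial ℕ) : PowerSeries ℕ) by
      push_cast [Finset.prod_pow_eq_pow_sum]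
      rfl] at h
  simp only [hco] at h
  rw [← h]

lemma multiOrder_eq_sum {m : ℕ →₀ ℕ} {s : Finset ℕ} (h : m.support ⊆ s) :
    multiOrder m = ∑ j ∈ s, m j :=
  Finsupp.sum_of_support_subset _ h _ (fun _ _ => rfl)

/-- Vandermonde on the slice of `Iic ν` of order `ℓ`. -/
lemma vand (ν : ℕ →₀ ℕ) (ℓ : ℕ) :
    ∑ m ∈ (Finset.Iic ν).filter (fun m => multiOrder m = ℓ),
        ∏ j ∈ ν.support, (ν j).choose (m j) = (multiOrder ν).choose ℓ := by
  rw [show multiOrder ν = ∑ j ∈ ν.support, ν j from multiOrder_eq_sum (subset_refl _),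
    ← vdm ν.support (fun j => ν j) ℓ]
  apply Finset.sum_subset
  · intro m hm
    simp only [Finset.mem_filter, Finset.mem_Iic] at hm
    obtain ⟨hle, hord⟩ := hm
    have hsupp : m.support ⊆ ν.support := Finsupp.support_mono hle
    rw [Finset.mem_finsuppAntidiag]
    exact ⟨by rw [← multiOrder_eq_sum hsupp, hord], hsupp⟩
  · intro μ hμ hμ'
    rw [Finset.mem_finsuppAntidiag] at hμ
    simp only [Finset.mem_filter, Finset.mem_Iic] at hμ'
    by_cases hle : μ ≤ ν
    · exact absurd ⟨hle, by rw [multiOrder_eq_sum hμ.2, hμ.1]⟩ hμ'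
    · obtain ⟨j, hj⟩ := not_forall.mp (fun h => hle (fun j => h j))
      push_neg at hj
      have hjs : j ∈ ν.support := by
        by_contra hns
        have : ν j = 0 := Finsupp.notMem_support_iff.mp hns
        have : j ∈ μ.support := Finsupp.mem_support_iff.mpr (by omega)
        exact hns (hμ.2 this)
      exact Finset.prod_eq_zero hjs (Nat.choose_eq_zero_of_lt hj)

/-- `∑_{0 ≠ m ≤ ν} binom(ν, m) Λ_{|ν| - |m|} = Λ_{|ν|}` for `ν ≠ 0`. -/
theorem stmt5 (ν : ℕ →₀ ℕ) (hν : ν ≠ 0) :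
    ∑ m ∈ (Finset.Iic ν).erase 0,
        (∏ j ∈ ν.support, Nat.choose (ν j) (m j)) * orderedBell (multiOrder ν - multiOrder m)
      = orderedBell (multiOrder ν) := by
  set k := multiOrder ν with hk
  set F : (ℕ →₀ ℕ) → ℕ := fun m =>
    (∏ j ∈ ν.support, Nat.choose (ν j) (m j)) * orderedBell (k - multiOrder m) with hF
  -- k ≠ 0
  have hk0 : k ≠ 0 := by
    intro h
    apply hν
    have : ∀ j ∈ ν.support, ν j = 0 := by
      intro j hj
      have := (Finset.sum_eq_zero_iff).mp (by rw [← multiOrder_eq_sum (subset_refl ν.support)]; exact h) j hj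
      exact this
    ext j
    by_cases hj : j ∈ ν.support
    · exact this j hj
    · exact Finsupp.notMem_support_iff.mp hj
  obtain ⟨k', hk'⟩ : ∃ k', k = k' + 1 := ⟨k - 1, by omega⟩
  -- total sum over Iic ν
  have h0mem : (0 : ℕ →₀ ℕ) ∈ Finset.Iic ν := Finset.mem_Iic.mpr zero_le
  have hsplit : ∑ m ∈ Finset.Iic ν, F m = F 0 + ∑ m ∈ (Finset.Iic ν).erase 0, F m :=
    (Finset.add_sum_erase _ F h0mem).symm
  have hF0 : F 0 = orderedBell k := by
    simp [hF, multiOrder]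
  -- fiberwise computation of the total sum
  have hmaps : ∀ m ∈ Finset.Iic ν, multiOrder m ∈ Finset.range (k + 1) := by
    intro m hm
    rw [Finset.mem_Iic] at hm
    have hsupp : m.support ⊆ ν.support := Finsupp.support_mono hm
    rw [Finset.mem_range, Nat.lt_succ_iff, multiOrder_eq_sum hsupp, hk,
      multiOrder_eq_sum (subset_refl ν.support)]
    exact Finset.sum_le_sum (fun j _ => hm j)
  have htot : ∑ m ∈ Finset.Iic ν, F m
      = ∑ ℓ ∈ Finset.range (k + 1), k.choose ℓ * orderedBell (k - ℓ) := by
    rw [← Finset.sum_fiberwise_of_maps_to hmaps F]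
    apply Finset.sum_congr rfl
    intro ℓ _
    have : ∑ m ∈ (Finset.Iic ν).filter (fun m => multiOrder m = ℓ), F m
        = ∑ m ∈ (Finset.Iic ν).filter (fun m => multiOrder m = ℓ),
            (∏ j ∈ ν.support, (ν j).choose (m j)) * orderedBell (k - ℓ) := by
      apply Finset.sum_congr rfl
      intro m hm
      simp only [hF]
      rw [(Finset.mem_filter.mp hm).2]
    rw [this, ← Finset.sum_mul, vand ν ℓ]
  -- the ordered Bell recurrence
  have hrec : ∑ ℓ ∈ Finset.range (k + 1), k.choose ℓ * orderedBell (k - ℓ)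
      = orderedBell k + orderedBell k := by
    rw [hk', Finset.sum_range_succ']
    simp only [Nat.choose_zero_right, Nat.sub_zero, one_mul]
    rw [add_comm]
    congr 1
    rw [show orderedBell (k' + 1)
        = ∑ i ∈ Finset.range (k' + 1), Nat.choose (k' + 1) (i + 1) * orderedBell (k' - i) from
        by rw [orderedBell]]
    apply Finset.sum_congr rfl
    intro i _
    rw [show k' + 1 - (i + 1) = k' - i by omega]
  have := hsplit
  rw [htot, hrec, hF0] at this
  show ∑ m ∈ (Finset.Iic ν).erase 0, F m = orderedBell k
  omega
end

section
/- Let λ be a real number with 1/2 < λ < 1, set κ := 2λ/(1+λ) and ϱ(λ) := 2ζ(2λ)/(2π²)^λ, where ζ is the Riemann zeta function. Let (b_j)_{j≥1} be nonnegative real numbers with B := ∑_{j=1}^∞ b_j^κ < ∞. Then for every s ∈ ℕ, the quantity C(s, λ) := ∑_{𝔲 ⊆ {1,…,s}} (|𝔲|! · ∏_{j ∈ 𝔲} (b_j / √(ϱ(λ))))^κ · ϱ(λ)^{|𝔲|} satisfies C(s, λ) ≤ ∑_{ℓ=0}^∞ (ℓ!)^{κ − 1} · (ϱ(λ)^{1/(1+λ)}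 · B)^ℓ, and this upper bound is finite and independent of s. -/
private lemma binom_aux (S c : ℝ) (hS : 0 ≤ S) (hc : 0 ≤ c) (n : ℕ) :
    S ^ (n + 1) + ((n : ℝ) + 1) * c * S ^ n ≤ (S + c) ^ (n + 1) := by
  rw [add_pow]
  have hsub : ({n, n + 1} : Finset ℕ) ⊆ Finset.range (n + 2) := by
    intro x hx
    simp only [Finset.mem_insert, Finset.mem_singleton] at hx
    rcases hx with h | h <;> simp [h]
  calc S ^ (n + 1) + ((n : ℝ) + 1) * c * S ^ n
      = ∑ k ∈ ({n, n + 1} : Finset ℕ),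
          S ^ k * c ^ (n + 1 - k) * ((n + 1).choose k : ℝ) := by
        rw [Finset.sum_insert (by simp), Finset.sum_singleton]
        simp [Nat.choose_succ_self_right]
        ring
    _ ≤ ∑ k ∈ Finset.range (n + 2), S ^ k * c ^ (n + 1 - k) * ((n + 1).choose k : ℝ) := by
        refine Finset.sum_le_sum_of_subset_of_nonneg hsub ?_
        intro i _ _
        positivity

private lemma esymm_le {α : Type*} [DecidableEq α] (c : α → ℝ) (hc : ∀ j, 0 ≤ c j)
    (A : Finset α) :
    ∀ ℓ : ℕ, (Nat.factorial ℓ : ℝ) * ∑ t ∈ A.powersetCard ℓ, ∏ j ∈ t, c j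
      ≤ (∑ j ∈ A, c j) ^ ℓ := by
  induction A using Finset.induction_on with
  | empty =>
    intro ℓ
    cases ℓ with
    | zero => simp
    | succ n =>
      rw [Finset.powersetCard_eq_empty.2 (by simp)]
      simp
  | insert _ _ ha =>
    rename_i a A ih
    intro ℓ
    cases ℓ with
    | zero => simp
    | succ n =>
      have hE : ∀ m : ℕ, 0 ≤ ∑ t ∈ A.powersetCard m, ∏ j ∈ t, c j := fun m =>
        Finset.sum_nonneg fun t _ => Finset.prod_nonneg fun j _ => hc j
      have hS : 0 ≤ ∑ j ∈ A, c j := Finset.sum_nonneg fun j _ => hc j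
      have hdisj : Disjoint (A.powersetCard (n + 1)) ((A.powersetCard n).image (insert a)) := by
        rw [Finset.disjoint_left]
        intro t ht ht'
        obtain ⟨u, hu, rfl⟩ := Finset.mem_image.1 ht'
        exact ha ((Finset.mem_powersetCard.1 ht).1 (Finset.mem_insert_self a u))
      have hinj : ∀ x ∈ A.powersetCard n, ∀ y ∈ A.powersetCard n,
          insert a x = insert a y → x = y := by
        intro x hx y hy hxy
        have hax : a ∉ x := fun h => ha ((Finset.mem_powersetCard.1 hx).1 h)
        have hay : a ∉ y := fun h => ha ((Finset.mem_powersetCard.1 hy).1 h)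
        rw [← Finset.erase_insert hax, hxy, Finset.erase_insert hay]
      rw [Finset.powersetCard_succ_insert ha, Finset.sum_union hdisj,
        Finset.sum_image hinj, Finset.sum_insert ha]
      have hprodins : ∑ u ∈ A.powersetCard n, ∏ j ∈ insert a u, c j
          = c a * ∑ u ∈ A.powersetCard n, ∏ j ∈ u, c j := by
        rw [Finset.mul_sum]
        refine Finset.sum_congr rfl fun u hu => ?_
        exact Finset.prod_insert fun h => ha ((Finset.mem_powersetCard.1 hu).1 h)
      rw [hprodins]
      have h1 := ih (n + 1)
      have h2 := ih n
      have hfs : ((n + 1).factorial : ℝ) = ((n : ℝ) + 1) * (n.factorial : ℝ) := by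
        push_cast [Nat.factorial_succ]; ring
      calc ((n + 1).factorial : ℝ) *
            ((∑ t ∈ A.powersetCard (n + 1), ∏ j ∈ t, c j)
              + c a * ∑ u ∈ A.powersetCard n, ∏ j ∈ u, c j)
          = ((n + 1).factorial : ℝ) * (∑ t ∈ A.powersetCard (n + 1), ∏ j ∈ t, c j)
            + ((n : ℝ) + 1) * c a * ((n.factorial : ℝ) * ∑ u ∈ A.powersetCard n, ∏ j ∈ u, c j) := by
            rw [hfs]; ring
        _ ≤ (∑ j ∈ A, c j) ^ (n + 1) + ((n : ℝ) + 1) * c a * (∑ j ∈ A, c j) ^ n := by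
            refine add_le_add h1 (mul_le_mul_of_nonneg_left h2 ?_)
            have := hc a
            positivity
        _ ≤ ((∑ j ∈ A, c j) + c a) ^ (n + 1) := binom_aux _ _ hS (hc a) n
        _ = (c a + ∑ j ∈ A, c j) ^ (n + 1) := by rw [add_comm]

/-- the weight-dependent QMC constant `C(s, λ)` is bounded
independently of `s`. Here `ζ(x) = ∑_{k≥1} k^{-x}` and `ϱ(λ) = 2ζ(2λ)/(2π²)^λ`. -/
theorem stmt11 (lam : ℝ) (hlam1 : 1 / 2 < lam) (hlam2 : lam < 1)
    (κ ϱ : ℝ) (hκ : κ = 2 * lam / (1 + lam))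
    (hϱ : ϱ = 2 * (∑' k : ℕ, 1 / ((k : ℝ) + 1) ^ (2 * lam)) / (2 * Real.pi ^ 2) ^ lam)
    (b : ℕ → ℝ) (hb : ∀ j, 0 ≤ b j)
    (hB : Summable fun j => b j ^ κ) (B : ℝ) (hBdef : B = ∑' j, b j ^ κ) :
    ∀ s : ℕ,
      (∑ 𝔲 ∈ (Finset.univ : Finset (Fin s)).powerset,
          ((Nat.factorial 𝔲.card : ℝ) * ∏ j ∈ 𝔲, (b j / Real.sqrt ϱ)) ^ κ * ϱ ^ 𝔲.card)
        ≤ ∑' ℓ : ℕ, (Nat.factorial ℓ : ℝ) ^ (κ - 1) * (ϱ ^ (1 / (1 + lam)) * B) ^ ℓ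
      ∧ Summable (fun ℓ : ℕ =>
          (Nat.factorial ℓ : ℝ) ^ (κ - 1) * (ϱ ^ (1 / (1 + lam)) * B) ^ ℓ) := by
  intro s
  have hlam0 : (0 : ℝ) < lam := by linarith
  have h1lam : (0 : ℝ) < 1 + lam := by linarith
  have hκ0 : 0 < κ := by rw [hκ]; positivity
  have hκ1 : κ < 1 := by rw [hκ, div_lt_one h1lam]; linarith
  -- positivity of ϱ
  have hzsum : Summable (fun k : ℕ => 1 / ((k : ℝ) + 1) ^ (2 * lam)) := by
    have h := (Real.summable_one_div_nat_rpow (p := 2 * lam)).2 (by linarith)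
    have h' := (summable_nat_add_iff 1).2 h
    simpa using h'
  have hϱ0 : 0 < ϱ := by
    rw [hϱ]
    apply div_pos
    · have h0 : (0 : ℝ) < 1 / (((0 : ℕ) : ℝ) + 1) ^ (2 * lam) := by norm_num
      have := Summable.tsum_pos hzsum (fun i => by positivity) 0 h0
      linarith
    · exact Real.rpow_pos_of_pos (by positivity) lam
  have hB0 : 0 ≤ B := by
    rw [hBdef]
    exact tsum_nonneg fun j => Real.rpow_nonneg (hb j) κ
  set ρ' : ℝ := ϱ ^ (1 / (1 + lam)) with hρ'
  have hρ'0 : 0 < ρ' := Real.rpow_pos_of_pos hϱ0 _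
  set x : ℝ := ρ' * B with hxdef
  have hx0 : 0 ≤ x := mul_nonneg hρ'0.le hB0
  have hfact : ∀ n : ℕ, (0 : ℝ) < (Nat.factorial n : ℝ) := fun n => by
    exact_mod_cast Nat.factorial_pos n
  have hf0 : ∀ n : ℕ, 0 ≤ (Nat.factorial n : ℝ) ^ (κ - 1) * x ^ n := fun n => by
    have := hfact n
    positivity
  -- summability
  have hsumm : Summable (fun ℓ : ℕ => (Nat.factorial ℓ : ℝ) ^ (κ - 1) * x ^ ℓ) := by
    apply summable_of_ratio_norm_eventually_le (r := 1 / 2) (by norm_num)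
    have h1 : Filter.Tendsto (fun n : ℕ => ((n : ℝ) + 1)) Filter.atTop Filter.atTop :=
      Filter.tendsto_atTop_add_const_right _ 1 tendsto_natCast_atTop_atTop
    have h2 : Filter.Tendsto (fun y : ℝ => y ^ (κ - 1)) Filter.atTop (nhds 0) := by
      have := tendsto_rpow_neg_atTop (y := 1 - κ) (by linarith)
      simpa [neg_sub] using this
    have htend : Filter.Tendsto (fun n : ℕ => ((n : ℝ) + 1) ^ (κ - 1) * x)
        Filter.atTop (nhds 0) := by
      simpa using (h2.comp h1).mul_const x
    filter_upwards [htend.eventually_le_const (by norm_num : (0 : ℝ) < 1 / 2)] with n hn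
    rw [Real.norm_of_nonneg (hf0 _), Real.norm_of_nonneg (hf0 _)]
    have hfs : ((n + 1).factorial : ℝ) = ((n : ℝ) + 1) * (n.factorial : ℝ) := by
      push_cast [Nat.factorial_succ]; ring
    have hrw : ((n + 1).factorial : ℝ) ^ (κ - 1) * x ^ (n + 1)
        = (((n : ℝ) + 1) ^ (κ - 1) * x) * ((n.factorial : ℝ) ^ (κ - 1) * x ^ n) := by
      rw [hfs, Real.mul_rpow (by positivity) (by positivity), pow_succ]
      ring
    rw [hrw]
    exact mul_le_mul_of_nonneg_right hn (hf0 n)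
  refine ⟨?_, hsumm⟩
  -- term rewriting
  have hterm : ∀ 𝔲 : Finset (Fin s),
      ((Nat.factorial 𝔲.card : ℝ) * ∏ j ∈ 𝔲, (b j / Real.sqrt ϱ)) ^ κ * ϱ ^ 𝔲.card
      = (Nat.factorial 𝔲.card : ℝ) ^ κ * (∏ j ∈ 𝔲, (b j : ℝ) ^ κ) * ρ' ^ 𝔲.card := by
    intro 𝔲
    set ℓ := 𝔲.card with hℓ
    have hbprod : 0 ≤ ∏ j ∈ 𝔲, (b j : ℝ) := Finset.prod_nonneg fun j _ => hb _
    have hsqpos : 0 < Real.sqrt ϱ := Real.sqrt_pos.2 hϱ0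
    have h1 : (∏ j ∈ 𝔲, (b j / Real.sqrt ϱ)) = (∏ j ∈ 𝔲, (b j : ℝ)) / (Real.sqrt ϱ) ^ ℓ := by
      rw [Finset.prod_div_distrib, Finset.prod_const]
    have h3 : ϱ ^ (ℓ : ℕ) / ((Real.sqrt ϱ) ^ ℓ) ^ κ = ρ' ^ (ℓ : ℕ) := by
      rw [hρ', Real.sqrt_eq_rpow, ← Real.rpow_natCast (ϱ ^ (1 / 2 : ℝ)) ℓ,
        ← Real.rpow_mul hϱ0.le, ← Real.rpow_mul hϱ0.le,
        ← Real.rpow_natCast ϱ ℓ, ← Real.rpow_natCast (ϱ ^ (1 / (1 + lam))) ℓ,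
        ← Real.rpow_mul hϱ0.le, ← Real.rpow_sub hϱ0]
      congr 1
      rw [hκ]
      field_simp
      ring
    rw [h1, Real.mul_rpow (by positivity) (by positivity),
      Real.div_rpow hbprod (by positivity),
      ← Real.finset_prod_rpow 𝔲 (fun j => b ↑j) (fun j _ => hb _) κ, ← h3]
    have hQ : ((Real.sqrt ϱ) ^ ℓ) ^ κ ≠ 0 := by positivity
    field_simp
    try ring
  calc (∑ 𝔲 ∈ (Finset.univ : Finset (Fin s)).powerset,
          ((Nat.factorial 𝔲.card : ℝ) * ∏ j ∈ 𝔲, (b j / Real.sqrt ϱ)) ^ κ * ϱ ^ 𝔲.card)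
      = ∑ 𝔲 ∈ (Finset.univ : Finset (Fin s)).powerset,
          (Nat.factorial 𝔲.card : ℝ) ^ κ * (∏ j ∈ 𝔲, (b j : ℝ) ^ κ) * ρ' ^ 𝔲.card :=
        Finset.sum_congr rfl fun 𝔲 _ => hterm 𝔲
    _ = ∑ ℓ ∈ Finset.range (s + 1), ∑ 𝔲 ∈ Finset.powersetCard ℓ (Finset.univ : Finset (Fin s)),
          (Nat.factorial 𝔲.card : ℝ) ^ κ * (∏ j ∈ 𝔲, (b j : ℝ) ^ κ) * ρ' ^ 𝔲.card := by
        rw [Finset.sum_powerset]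
        simp
    _ ≤ ∑ ℓ ∈ Finset.range (s + 1), (Nat.factorial ℓ : ℝ) ^ (κ - 1) * x ^ ℓ := by
        refine Finset.sum_le_sum fun ℓ _ => ?_
        have hstep : ∑ 𝔲 ∈ Finset.powersetCard ℓ (Finset.univ : Finset (Fin s)),
            (Nat.factorial 𝔲.card : ℝ) ^ κ * (∏ j ∈ 𝔲, (b j : ℝ) ^ κ) * ρ' ^ 𝔲.card
            = (Nat.factorial ℓ : ℝ) ^ κ * ρ' ^ ℓ *
              ∑ 𝔲 ∈ Finset.powersetCard ℓ (Finset.univ : Finset (Fin s)),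
                ∏ j ∈ 𝔲, (b j : ℝ) ^ κ := by
          rw [Finset.mul_sum]
          refine Finset.sum_congr rfl fun 𝔲 h𝔲 => ?_
          rw [(Finset.mem_powersetCard.1 h𝔲).2]
          ring
        rw [hstep]
        set E : ℝ := ∑ 𝔲 ∈ Finset.powersetCard ℓ (Finset.univ : Finset (Fin s)),
            ∏ j ∈ 𝔲, (b j : ℝ) ^ κ with hEdef
        set S : ℝ := ∑ j : Fin s, (b j : ℝ) ^ κ with hSdef
        have hE0 : 0 ≤ E :=
          Finset.sum_nonneg fun t _ => Finset.prod_nonneg fun j _ => Real.rpow_nonneg (hb _) κ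
        have hS0 : 0 ≤ S := Finset.sum_nonneg fun j _ => Real.rpow_nonneg (hb _) κ
        have hE_le : (Nat.factorial ℓ : ℝ) * E ≤ S ^ ℓ :=
          esymm_le (fun j : Fin s => (b j : ℝ) ^ κ) (fun j => Real.rpow_nonneg (hb _) κ)
            Finset.univ ℓ
        have hS_le : S ≤ B := by
          rw [hSdef, hBdef, Fin.sum_univ_eq_sum_range (fun j => (b j : ℝ) ^ κ) s]
          exact Summable.sum_le_tsum (Finset.range s) (fun i _ => Real.rpow_nonneg (hb _) κ) hB
        have hfs : (Nat.factorial ℓ : ℝ) ^ κ = (Nat.factorial ℓ : ℝ) ^ (κ - 1) *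
            (Nat.factorial ℓ : ℝ) := by
          conv_lhs => rw [show κ = (κ - 1) + 1 by ring]
          rw [Real.rpow_add (hfact ℓ), Real.rpow_one]
        calc (Nat.factorial ℓ : ℝ) ^ κ * ρ' ^ ℓ * E
            = (Nat.factorial ℓ : ℝ) ^ (κ - 1) * (ρ' ^ ℓ * ((Nat.factorial ℓ : ℝ) * E)) := by
              rw [hfs]; ring
          _ ≤ (Nat.factorial ℓ : ℝ) ^ (κ - 1) * (ρ' ^ ℓ * S ^ ℓ) := by
              have h := hfact ℓ
              refine mul_le_mul_of_nonneg_left (mul_le_mul_of_nonneg_left hE_le ?_) ?_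
              · positivity
              · positivity
          _ ≤ (Nat.factorial ℓ : ℝ) ^ (κ - 1) * (ρ' ^ ℓ * B ^ ℓ) := by
              have h := hfact ℓ
              refine mul_le_mul_of_nonneg_left (mul_le_mul_of_nonneg_left ?_ ?_) ?_
              · exact pow_le_pow_left₀ hS0 hS_le ℓ
              · positivity
              · positivity
          _ = (Nat.factorial ℓ : ℝ) ^ (κ - 1) * x ^ ℓ := by rw [hxdef, mul_pow]
    _ ≤ ∑' ℓ : ℕ, (Nat.factorial ℓ : ℝ) ^ (κ - 1) * x ^ ℓ :=
        Summable.sum_le_tsum (Finset.range (s + 1)) (fun ℓ _ => hf0 ℓ) hsumm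
end
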